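/- The relation ⊥_ω is a compatibility relation on the PCM of histories. In particular it is associative: if x ⊥_ω y and (x ⊎ y) ⊥_ω z, then x ⊥_ω (y ⊎ z) and y ⊥_ω z. -/

import Mathlib

/-- A partial commutative monoid structure: a partial binary operation
(encoded with `Option`) together with a unit element. -/
structure PartialOp (M : Type) where
  op : M → M → Option M
  one : M

/-- `x ⊥ y`: the join `x • y` is defined. -/
def PartialOp.Defined {M : Type} (P : PartialOp M) (x y : M) : Prop :=
  (P.op x y).isSome

/-- The PCM laws: commutativity (including of definedness), unit, and
partial associativity. -/
structure IsPCM {M : Type} (P : PartialOp M) : Prop where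
  comm : ∀ x y, P.op x y = P.op y x
  one_op : ∀ x, P.op P.one x = some x
  assoc : ∀ x y z xy w, P.op x y = some xy → P.op xy z = some w →
    ∃ yz, P.op y z = some yz ∧ P.op x yz = some w
/-- A compatibility relation on a PCM. -/
structure IsCompatRel {M : Type} (P : PartialOp M) (R : M → M → Prop) : Prop where
  unitary : R P.one P.one
  symm_iff : ∀ x y, R x y ↔ R y x
  compat : ∀ x y, R x y → (P.op x y).isSome
  unital : ∀ x y, R x y → R x P.one
  assoc : ∀ x y z xy, R x y → P.op x y = some xy → R xy z →
    R y z ∧ ∃ yz, P.op y z = some yz ∧ R x yz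
/-- The two operations recorded in lock histories. -/
inductive LU | L | U deriving DecidableEq

/-- A history: a finite map from positive timestamps to `{L, U}`. -/
abbrev Hist := Finmap (fun _ : ℕ+ => LU)

/-- `last_stamp h = max ({0} ∪ dom h)`. -/
noncomputable def lastStamp (h : Hist) : ℕ := h.keys.sup (fun t => (t : ℕ))

/-- `last_op h` is `h (last_stamp h)` if `last_stamp h ≠ 0`, and `U` otherwise. -/
noncomputable def lastOp (h : Hist) : LU :=
  if hpos : 0 < lastStamp h then (h.lookup ⟨lastStamp h, hpos⟩).getD LU.U else LU.U

/-- `ω h` holds iff the last operation of `h` is a lock. -/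
noncomputable def omega (h : Hist) : Prop := lastOp h = LU.L

/-- `fresh h = 1 + last_stamp h`, as a positive timestamp. -/
noncomputable def freshStamp (h : Hist) : ℕ+ := ⟨lastStamp h + 1, Nat.succ_pos _⟩

/-- `x ⊥_ω y`. -/
noncomputable def sepOmega (x y : Hist) : Prop :=
  (omega x → lastStamp y < lastStamp x) ∧
  (omega y → lastStamp x < lastStamp y) ∧
  x.Disjoint y

open scoped Classical in
/-- The PCM of histories: disjoint union, with unit the empty history. -/
noncomputable def histOp : PartialOp Hist where
  op x y := if x.Disjoint y then some (x ∪ y) else none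
  one := ∅


lemma lastStamp_pos_of_omega {h : Hist} (hw : omega h) : 0 < lastStamp h := by
  by_contra hc
  simp [omega, lastOp, hc] at hw

lemma mem_of_lastStamp_pos {h : Hist} (hp : 0 < lastStamp h) :
    (⟨lastStamp h, hp⟩ : ℕ+) ∈ h := by
  have hne : h.keys.Nonempty := by
    by_contra hc
    rw [Finset.not_nonempty_iff_eq_empty] at hc
    simp [lastStamp, hc] at hp
  obtain ⟨t, ht, hst⟩ := Finset.exists_mem_eq_sup h.keys hne (fun t => (t : ℕ))
  have : (⟨lastStamp h, hp⟩ : ℕ+) = t := Subtype.ext hst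
  rw [this]
  exact Finmap.mem_keys.mp ht

lemma lastStamp_union {x y : Hist} :
    lastStamp (x ∪ y) = max (lastStamp x) (lastStamp y) := by
  unfold lastStamp
  rw [Finmap.keys_union, Finset.sup_union]

lemma lastStamp_empty : lastStamp (∅ : Hist) = 0 := by
  simp [lastStamp]

lemma not_omega_empty : ¬ omega (∅ : Hist) := fun h => by
  have := lastStamp_pos_of_omega h
  rw [lastStamp_empty] at this
  exact lt_irrefl 0 this

lemma omega_union_left {x y : Hist} (hlt : lastStamp y < lastStamp x) :
    omega (x ∪ y) ↔ omega x := by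
  have hp : 0 < lastStamp x := lt_of_le_of_lt (Nat.zero_le _) hlt
  have hls : lastStamp (x ∪ y) = lastStamp x := by
    rw [lastStamp_union]; exact max_eq_left hlt.le
  unfold omega lastOp
  rw [hls, dif_pos hp, dif_pos hp]
  erw [Finmap.lookup_union_left (mem_of_lastStamp_pos hp)]
  exact Iff.rfl

lemma omega_union_right {x y : Hist} (hd : x.Disjoint y)
    (hlt : lastStamp x < lastStamp y) :
    omega (x ∪ y) ↔ omega y := by
  have hp : 0 < lastStamp y := lt_of_le_of_lt (Nat.zero_le _) hlt
  have hls : lastStamp (x ∪ y) = lastStamp y := by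
    rw [lastStamp_union]; exact max_eq_right hlt.le
  have hmem : (⟨lastStamp y, hp⟩ : ℕ+) ∈ y := mem_of_lastStamp_pos hp
  have hnm : (⟨lastStamp y, hp⟩ : ℕ+) ∉ x := fun hx => hd _ hx hmem
  unfold omega lastOp
  rw [hls, dif_pos hp, dif_pos hp]
  erw [Finmap.lookup_union_right hnm]
  exact Iff.rfl

lemma lastStamp_eq_zero_of_disjoint {y z : Hist} (hd : y.Disjoint z)
    (he : lastStamp y = lastStamp z) : lastStamp y = 0 := by
  by_contra h
  have hp : 0 < lastStamp y := Nat.pos_of_ne_zero h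
  have hp2 : 0 < lastStamp z := he ▸ hp
  have h1 := mem_of_lastStamp_pos hp
  have h2 := mem_of_lastStamp_pos hp2
  have he' : (⟨lastStamp y, hp⟩ : ℕ+) = ⟨lastStamp z, hp2⟩ := Subtype.ext he
  exact hd _ h1 (he' ▸ h2)

lemma sepOmega_main : ∀ x y z : Hist, sepOmega x y → sepOmega (x ∪ y) z →
    sepOmega x (y ∪ z) ∧ sepOmega y z := by
  rintro x y z ⟨hxy1, hxy2, hdxy⟩ ⟨hz1, hz2, hdz⟩
  rw [Finmap.disjoint_union_left] at hdz
  obtain ⟨hdxz, hdyz⟩ := hdz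
  have hlsu : lastStamp (x ∪ y) = max (lastStamp x) (lastStamp y) := lastStamp_union
  constructor
  · refine ⟨?_, ?_, ?_⟩
    · intro hwx
      have hba : lastStamp y < lastStamp x := hxy1 hwx
      have hwxy : omega (x ∪ y) := (omega_union_left hba).mpr hwx
      have := hz1 hwxy
      rw [hlsu, max_eq_left hba.le] at this
      rw [lastStamp_union]
      exact max_lt hba this
    · intro hwyz
      rcases lt_trichotomy (lastStamp y) (lastStamp z) with hlt | heq | hgt
      · have hwz : omega z := (omega_union_right hdyz hlt).mp hwyz
        have := hz2 hwz
        rw [hlsu] at this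
        rw [lastStamp_union, max_eq_right hlt.le]
        exact lt_of_le_of_lt (le_max_left _ _) this
      · exfalso
        have h0 : lastStamp y = 0 := lastStamp_eq_zero_of_disjoint hdyz heq
        have hp := lastStamp_pos_of_omega hwyz
        rw [lastStamp_union, ← heq, h0] at hp
        simp at hp
      · have hwy : omega y := (omega_union_left hgt).mp hwyz
        have := hxy2 hwy
        rw [lastStamp_union]
        exact lt_of_lt_of_le this (le_max_left _ _)
    · rw [Finmap.disjoint_union_right]
      exact ⟨hdxy, hdxz⟩
  · refine ⟨?_, ?_, hdyz⟩
    · intro hwy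
      have hab : lastStamp x < lastStamp y := hxy2 hwy
      have hwxy : omega (x ∪ y) := (omega_union_right hdxy hab).mpr hwy
      have := hz1 hwxy
      rw [hlsu, max_eq_right hab.le] at this
      exact this
    · intro hwz
      have := hz2 hwz
      rw [hlsu] at this
      exact lt_of_le_of_lt (le_max_right _ _) this

/-- `⊥_ω` is a compatibility relation on the PCM of histories;
in particular it is associative: if `x ⊥_ω y` and `(x ⊎ y) ⊥_ω z`, then
`x ⊥_ω (y ⊎ z)` and `y ⊥_ω z`. -/
theorem sepOmega_isCompatRel :
    IsCompatRel histOp sepOmega ∧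
    (∀ x y z : Hist, sepOmega x y → sepOmega (x ∪ y) z →
      sepOmega x (y ∪ z) ∧ sepOmega y z) := by
  classical
  constructor
  · constructor
    · exact ⟨fun h => absurd h not_omega_empty, fun h => absurd h not_omega_empty,
        fun k hk => absurd hk Finmap.notMem_empty⟩
    · intro x y
      unfold sepOmega
      constructor
      · rintro ⟨h1, h2, hd⟩; exact ⟨h2, h1, hd.symm _ _⟩
      · rintro ⟨h1, h2, hd⟩; exact ⟨h2, h1, hd.symm _ _⟩
    · rintro x y ⟨_, _, hd⟩
      simp [histOp, hd]
    · rintro x y ⟨h1, h2, hd⟩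
      refine ⟨fun hwx => ?_, fun hw => absurd hw not_omega_empty,
        fun k hk => Finmap.notMem_empty⟩
      show lastStamp (∅ : Hist) < lastStamp x
      rw [lastStamp_empty]
      exact lastStamp_pos_of_omega hwx
    · intro x y z xy hxy hop hxyz
      have hd : x.Disjoint y := hxy.2.2
      have hxy' : xy = x ∪ y := by
        simp only [histOp, if_pos hd] at hop
        exact (Option.some_injective _ hop).symm
      subst hxy'
      obtain ⟨h1, h2⟩ := sepOmega_main x y z hxy hxyz
      exact ⟨h2, y ∪ z, by simp [histOp, h2.2.2], h1⟩
  · exact sepOmega_main
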